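/- Let f, g, F, Γ, φ be as above with Γ(|φ'|) = F(φ) and φ' < 0 on (0, T]. Then φ is twice differentiable with φ''(t) = f(φ(t))·|φ'(t)| / (2 g(2|φ'(t)|) + 4N|φ'(t)|) wherever g(2|φ'|) + 2N|φ'| > 0; in particular φ'' > 0 and φ'' ≤ f(φ)/(4N). -/

import Mathlib

open MeasureTheory Filter intervalIntegral
open Topology

private lemma primitive_hasDerivAt {g : ℝ → ℝ} (hgc : ContinuousOn g (Set.Ici 0)) {x : ℝ}
    (hx : 0 < x) : HasDerivAt (fun u => ∫ t in (0:ℝ)..u, g t) (g x) x := by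
  have hca : ContinuousAt g x := hgc.continuousAt (Ici_mem_nhds hx)
  refine intervalIntegral.integral_hasDerivAt_right ?_ ?_ hca
  · refine (hgc.mono ?_).intervalIntegrable
    rw [Set.uIcc_of_le hx.le]
    exact Set.Icc_subset_Ici_self
  · exact ContinuousAt.stronglyMeasurableAtFilter isOpen_Ioi
      (fun y hy => hgc.continuousAt (Ici_mem_nhds hy)) x hx

theorem stmt_19 (f g : ℝ → ℝ) (N : ℝ) (hN : 1 ≤ N)
    (hfc : ContinuousOn f (Set.Ici 0)) (hgc : ContinuousOn g (Set.Ici 0))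
    (hfmono : StrictMonoOn f (Set.Ici 0)) (hgmono : StrictMonoOn g (Set.Ici 0))
    (hf0 : f 0 = 0) (hg0 : g 0 = 0)
    (hfpos : ∀ s, 0 < s → 0 < f s) (hgpos : ∀ s, 0 < s → 0 < g s)
    (F Γ : ℝ → ℝ)
    (hF : ∀ t, F t = ∫ s in (0:ℝ)..t, f s)
    (hΓ : ∀ s, Γ s = (∫ t in (0:ℝ)..(2 * s), g t) + 2 * N * s ^ 2)
    (T : ℝ) (hT : 0 < T) (φ φ' : ℝ → ℝ)
    (hφd : ∀ t ∈ Set.Ioc 0 T, HasDerivAt φ (φ' t) t)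
    (hφ'c : ContinuousOn φ' (Set.Ioc 0 T))
    (hφpos : ∀ t ∈ Set.Ioc 0 T, 0 < φ t)
    (hφ'neg : ∀ t ∈ Set.Ioc 0 T, φ' t < 0)
    (hrel : ∀ t ∈ Set.Ioc 0 T, Γ (|φ' t|) = F (φ t)) :
    ∀ t ∈ Set.Ioo 0 T, ∃ d : ℝ,
      HasDerivAt φ' d t ∧
      d = f (φ t) * |φ' t| / (2 * g (2 * |φ' t|) + 4 * N * |φ' t|) ∧
      0 < d ∧ d ≤ f (φ t) / (4 * N) := by
  have hNpos : (0:ℝ) < N := lt_of_lt_of_le one_pos hN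
  -- Γ derivative
  have hΓfun : Γ = fun s => (∫ t in (0:ℝ)..(2 * s), g t) + 2 * N * s ^ 2 := funext hΓ
  have hFfun : F = fun t => ∫ s in (0:ℝ)..t, f s := funext hF
  have hΓderiv : ∀ s : ℝ, 0 < s → HasDerivAt Γ (2 * g (2 * s) + 4 * N * s) s := by
    intro s hs
    rw [hΓfun]
    have h1 : HasDerivAt (fun u => ∫ t in (0:ℝ)..u, g t) (g (2 * s)) (2 * s) :=
      primitive_hasDerivAt hgc (by linarith)
    have h2 : HasDerivAt (fun u : ℝ => 2 * u) 2 s := by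
      simpa using (hasDerivAt_id s).const_mul 2
    have h3 : HasDerivAt (fun u : ℝ => ∫ t in (0:ℝ)..(2 * u), g t) (g (2 * s) * 2) s :=
      h1.comp s h2
    have h4 : HasDerivAt (fun u : ℝ => 2 * N * u ^ 2) (2 * N * (2 * s)) s := by
      simpa [mul_comm, mul_assoc, mul_left_comm] using ((hasDerivAt_pow 2 s).const_mul (2 * N))
    have := h3.add h4
    exact this.congr_deriv (by ring)
  have hFderiv : ∀ x : ℝ, 0 < x → HasDerivAt F (f x) x := by
    intro x hx
    rw [hFfun]
    exact primitive_hasDerivAt hfc hx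
  -- g nonneg on Ici 0
  have hgnn : ∀ x : ℝ, 0 ≤ x → 0 ≤ g x := by
    intro x hx
    rcases hx.eq_or_lt with h | h
    · simp [← h, hg0]
    · exact (hgpos x h).le
  -- Γ strict mono on Ici 0
  have hΓmono : StrictMonoOn Γ (Set.Ici 0) := by
    intro a ha b hb hab
    rw [hΓ a, hΓ b]
    have h2a : (0:ℝ) ≤ 2 * a := by simp at ha ⊢; linarith
    have hint : IntervalIntegrable g volume 0 (2 * b) := by
      refine (hgc.mono ?_).intervalIntegrable
      rw [Set.uIcc_of_le (by simp at hb; linarith)]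
      exact Set.Icc_subset_Ici_self
    have hint2 : IntervalIntegrable g volume 0 (2 * a) := by
      refine (hgc.mono ?_).intervalIntegrable
      rw [Set.uIcc_of_le h2a]
      exact Set.Icc_subset_Ici_self
    have hsplit : (∫ t in (0:ℝ)..(2 * b), g t) - ∫ t in (0:ℝ)..(2 * a), g t
        = ∫ t in (2*a)..(2*b), g t := by
      rw [intervalIntegral.integral_interval_sub_left hint hint2]
    have hnn : 0 ≤ ∫ t in (2*a)..(2*b), g t := by
      apply intervalIntegral.integral_nonneg (by linarith)
      intro u hu
      exact hgnn u (le_trans h2a hu.1)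
    have hsq : 2 * N * a ^ 2 < 2 * N * b ^ 2 := by
      have : a ^ 2 < b ^ 2 := by nlinarith [ha.out]
      nlinarith
    nlinarith [hsplit, hnn]
  -- main
  intro t₀ ht₀
  have ht₀' : t₀ ∈ Set.Ioc 0 T := ⟨ht₀.1, ht₀.2.le⟩
  set u₀ : ℝ := -φ' t₀ with hu₀def
  have hu₀pos : 0 < u₀ := by simpa [hu₀def] using hφ'neg t₀ ht₀'
  have habs : |φ' t₀| = u₀ := abs_of_neg (hφ'neg t₀ ht₀')
  set l : ℝ := u₀ / 2
  set r : ℝ := 2 * u₀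
  have hl : 0 < l := by positivity
  have hlu : l < u₀ := by simp only [l]; linarith
  have hur : u₀ < r := by simp only [r]; linarith
  have hlr : l ≤ r := by linarith
  have hIcc : Set.Icc l r ⊆ Set.Ici (0:ℝ) := fun x hx => le_trans hl.le hx.1
  have hΓmonoI : StrictMonoOn Γ (Set.Icc l r) := hΓmono.mono hIcc
  have hΓcontI : ContinuousOn Γ (Set.Icc l r) := fun x hx =>
    ((hΓderiv x (lt_of_lt_of_le hl hx.1)).continuousAt).continuousWithinAt
  have hΓinj : Set.InjOn Γ (Set.Icc l r) := hΓmonoI.injOn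
  -- image is Icc (Γ l) (Γ r)
  have himage : Γ '' Set.Icc l r = Set.Icc (Γ l) (Γ r) := by
    apply Set.Subset.antisymm
    · rintro _ ⟨x, hx, rfl⟩
      exact ⟨hΓmonoI.monotoneOn (Set.left_mem_Icc.2 hlr) hx hx.1,
        hΓmonoI.monotoneOn hx (Set.right_mem_Icc.2 hlr) hx.2⟩
    · exact intermediate_value_Icc hlr hΓcontI
  set h : ℝ → ℝ := Function.invFunOn Γ (Set.Icc l r) with hhdef
  have hleft : ∀ x ∈ Set.Icc l r, h (Γ x) = x := fun x hx => hΓinj.leftInvOn_invFunOn hx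
  have hright : ∀ y ∈ Set.Icc (Γ l) (Γ r), Γ (h y) = y := by
    intro y hy
    rw [← himage] at hy
    obtain ⟨x, hx, rfl⟩ := hy
    rw [hleft x hx]
  have hmapsto : ∀ y ∈ Set.Icc (Γ l) (Γ r), h y ∈ Set.Icc l r := by
    intro y hy
    rw [← himage] at hy
    obtain ⟨x, hx, rfl⟩ := hy
    rw [hleft x hx]; exact hx
  have hu₀mem : u₀ ∈ Set.Icc l r := ⟨hlu.le, hur.le⟩
  set a : ℝ := Γ u₀ with hadef
  have hamem : a ∈ Set.Ioo (Γ l) (Γ r) :=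
    ⟨hΓmonoI (Set.left_mem_Icc.2 hlr) hu₀mem hlu, hΓmonoI hu₀mem (Set.right_mem_Icc.2 hlr) hur⟩
  have hamem' : a ∈ Set.Icc (Γ l) (Γ r) := ⟨hamem.1.le, hamem.2.le⟩
  have hha : h a = u₀ := hleft u₀ hu₀mem
  have hnhds : Set.Icc (Γ l) (Γ r) ∈ 𝓝 a := Icc_mem_nhds hamem.1 hamem.2
  -- h strict mono on Icc (Γ l) (Γ r)
  have hhmono : StrictMonoOn h (Set.Icc (Γ l) (Γ r)) := by
    intro y1 hy1 y2 hy2 hy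
    by_contra hcon
    push_neg at hcon
    have := hΓmonoI.monotoneOn (hmapsto y2 hy2) (hmapsto y1 hy1) hcon
    rw [hright y1 hy1, hright y2 hy2] at this
    exact absurd this (not_le.2 hy)
  -- continuity of h at a
  have hhimg : h '' Set.Icc (Γ l) (Γ r) = Set.Icc l r := by
    apply Set.Subset.antisymm
    · rintro _ ⟨y, hy, rfl⟩; exact hmapsto y hy
    · intro x hx
      exact ⟨Γ x, by rw [← himage]; exact Set.mem_image_of_mem _ hx, hleft x hx⟩
  have hhcont : ContinuousAt h a := by
    apply hhmono.continuousAt_of_image_mem_nhds hnhds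
    rw [hhimg, hha]
    exact Icc_mem_nhds hlu hur
  -- derivative of h at a via inverse function
  set D : ℝ := 2 * g (2 * u₀) + 4 * N * u₀ with hDdef
  have hDpos : 0 < D := by
    have := hgpos (2 * u₀) (by linarith)
    have : 0 ≤ 2 * g (2*u₀) := by linarith
    nlinarith
  have hΓatu₀ : HasDerivAt Γ D (h a) := by
    rw [hha]; exact hΓderiv u₀ hu₀pos
  have hfg : ∀ᶠ y in 𝓝 a, Γ (h y) = y := by
    filter_upwards [Ioo_mem_nhds hamem.1 hamem.2] with y hy
    exact hright y ⟨hy.1.le, hy.2.le⟩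
  have hhderiv : HasDerivAt h D⁻¹ a :=
    HasDerivAt.of_local_left_inverse hhcont hΓatu₀ (ne_of_gt hDpos) hfg
  -- ψ := F ∘ φ derivative
  have hψderiv : HasDerivAt (fun t => F (φ t)) (f (φ t₀) * φ' t₀) t₀ :=
    (hFderiv (φ t₀) (hφpos t₀ ht₀')).comp t₀ (hφd t₀ ht₀')
  -- composed derivative
  have hcomp : HasDerivAt (fun t => h (F (φ t))) (D⁻¹ * (f (φ t₀) * φ' t₀)) t₀ := by
    have : F (φ t₀) = a := by rw [hadef, ← habs, ← hrel t₀ ht₀']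
    exact HasDerivAt.comp t₀ (this ▸ hhderiv) hψderiv
  -- φ' equals -(h ∘ ψ) near t₀
  have hφ'ca : ContinuousAt φ' t₀ :=
    hφ'c.continuousAt (mem_nhds_iff.2 ⟨Set.Ioo 0 T, Set.Ioo_subset_Ioc_self, isOpen_Ioo, ht₀⟩)
  have heq : ∀ᶠ t in 𝓝 t₀, φ' t = -(h (F (φ t))) := by
    have h1 : ∀ᶠ t in 𝓝 t₀, -φ' t ∈ Set.Ioo l r := by
      have : ContinuousAt (fun t => -φ' t) t₀ := hφ'ca.neg
      exact this (Ioo_mem_nhds hlu hur)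
    have h2 : ∀ᶠ t in 𝓝 t₀, t ∈ Set.Ioc 0 T :=
      mem_nhds_iff.2 ⟨Set.Ioo 0 T, Set.Ioo_subset_Ioc_self, isOpen_Ioo, ht₀⟩
    filter_upwards [h1, h2] with t h1t h2t
    have habs' : |φ' t| = -φ' t := abs_of_neg (hφ'neg t h2t)
    have : h (F (φ t)) = -φ' t := by
      rw [← hrel t h2t, habs']
      exact hleft _ ⟨h1t.1.le, h1t.2.le⟩
    rw [this]; ring
  have hd : HasDerivAt φ' (-(D⁻¹ * (f (φ t₀) * φ' t₀))) t₀ :=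
    hcomp.neg.congr_of_eventuallyEq heq
  have hφ'eq : φ' t₀ = -u₀ := by simp [hu₀def]
  have hfφpos : 0 < f (φ t₀) := hfpos _ (hφpos t₀ ht₀')
  have hdval : -(D⁻¹ * (f (φ t₀) * φ' t₀)) = f (φ t₀) * u₀ / D := by
    rw [hφ'eq, div_eq_mul_inv]; ring
  refine ⟨-(D⁻¹ * (f (φ t₀) * φ' t₀)), hd, ?_, ?_, ?_⟩
  · rw [hdval, habs, hDdef]
  · rw [hdval]; exact div_pos (mul_pos hfφpos hu₀pos) hDpos
  · rw [hdval]
    have h2 : f (φ t₀) * u₀ / (4 * N * u₀) = f (φ t₀) / (4 * N) := by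
      rw [div_eq_div_iff (by positivity) (by positivity)]; ring
    rw [← h2]
    have hgt := hgnn (2 * u₀) (by linarith)
    have hle : 4 * N * u₀ ≤ D := by rw [hDdef]; linarith
    gcongr
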